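/- Let Γ be a non-complete edge-regular graph with parameters (v,k,λ) such that (v−k−1)(v−k−2) − k(v−2k+λ) = 0. Then Γ is strongly regular, i.e., there exists an integer μ such that Γ is co-edge-regular with parameters (v,k,μ). -/

import Mathlib

/-- A finite simple graph is edge-regular with parameters `(v, k, λ)` if it has exactly
`v` vertices, every vertex has exactly `k` neighbours, it has at least one edge, and any
two adjacent vertices have exactly `λ` common neighbours. -/
def IsEdgeRegular {V : Type*} (G : SimpleGraph V) (v k l : ℕ) : Prop :=
  Nat.card V = v ∧ (∀ x : V, (G.neighborSet x).ncard = k) ∧ (∃ x y : V, G.Adj x y) ∧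
    ∀ x y : V, G.Adj x y → (G.commonNeighbors x y).ncard = l

/-- A finite simple graph is co-edge-regular with parameters `(v, k, μ)` if it has exactly
`v` vertices, every vertex has exactly `k` neighbours, it is not a complete graph, and any
two distinct non-adjacent vertices have exactly `μ` common neighbours. -/
def IsCoEdgeRegular {V : Type*} (G : SimpleGraph V) (v k μ : ℕ) : Prop :=
  Nat.card V = v ∧ (∀ x : V, (G.neighborSet x).ncard = k) ∧ G ≠ ⊤ ∧
    ∀ x y : V, x ≠ y → ¬ G.Adj x y → (G.commonNeighbors x y).ncard = μ

theorem edgeRegular_eq_zero_stronglyRegular {V : Type*} [Fintype V] (G : SimpleGraph V)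
    (v k l : ℕ) (h : IsEdgeRegular G v k l) (hnc : G ≠ ⊤)
    (h0 : ((v : ℤ) - k - 1) * ((v : ℤ) - k - 2) - (k : ℤ) * ((v : ℤ) - 2 * k + l) = 0) :
    ∃ μ : ℕ, IsCoEdgeRegular G v k μ := by
  classical
  obtain ⟨hv, hk, -, hl⟩ := h
  have hcard : Fintype.card V = v := by simpa [Nat.card_eq_fintype_card] using hv
  have hN : ∀ x : V, (G.neighborFinset x).card = k := by
    intro x
    have := hk x
    rwa [Set.ncard_eq_toFinset_card'] at this
  have hC : ∀ x y : V, (G.commonNeighbors x y).ncard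
      = (G.neighborFinset x ∩ G.neighborFinset y).card := by
    intro x y
    rw [Set.ncard_eq_toFinset_card']
    congr 1
    ext u
    rw [Set.mem_toFinset]
    simp [SimpleGraph.commonNeighbors]
  -- existence of a nonadjacent distinct pair
  obtain ⟨p, q, hpq, hnadj⟩ : ∃ p q : V, p ≠ q ∧ ¬G.Adj p q := by
    by_contra hcon
    push_neg at hcon
    apply hnc
    ext x y
    simp only [SimpleGraph.top_adj]
    exact ⟨fun h' => h'.ne, fun h' => hcon x y h'⟩
  -- main claim
  have key : ∀ x y : V, x ≠ y → ¬G.Adj x y →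
      ((G.neighborFinset x ∩ G.neighborFinset y).card : ℤ) = 2 * k + 2 - v := by
    intro x y hxy hxyn
    set A := G.neighborFinset x with hA
    set B := (Finset.univ : Finset V) \ insert x A with hB
    have hmemB : ∀ w : V, w ∈ B ↔ w ≠ x ∧ ¬G.Adj x w := by
      intro w
      simp [hB, hA, and_comm]
    have hxA : x ∉ A := by simp [hA]
    have hBcard : (B.card : ℤ) = v - k - 1 := by
      have h1 : (insert x A).card = k + 1 := by
        rw [Finset.card_insert_of_notMem hxA, hN x]
      have h2 : B.card = Fintype.card V - (k + 1) := by
        rw [hB, Finset.card_sdiff_of_subset (Finset.subset_univ _), Finset.card_univ, h1]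
      have h3 : k + 1 ≤ Fintype.card V := by
        rw [← h1, ← Finset.card_univ]
        exact Finset.card_le_card (Finset.subset_univ _)
      rw [h2]
      push_cast [Nat.cast_sub h3]
      rw [hcard]
      ring
    -- double counting
    have hsum : ∑ w ∈ B, ((A ∩ G.neighborFinset w).card : ℤ)
        = ∑ z ∈ A, ((B ∩ G.neighborFinset z).card : ℤ) := by
      have hrepr : ∀ (s : Finset V) (w : V), (s ∩ G.neighborFinset w).card
          = ∑ u ∈ s, if G.Adj w u then 1 else 0 := by
        intro s w
        rw [← Finset.card_filter]
        congr 1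
        ext u
        simp [Finset.mem_filter, G.adj_comm]
      simp only [hrepr]
      push_cast
      rw [Finset.sum_comm]
      apply Finset.sum_congr rfl
      intro z _
      apply Finset.sum_congr rfl
      intro w _
      simp [G.adj_comm]
    have hz : ∀ z ∈ A, ((B ∩ G.neighborFinset z).card : ℤ) = k - l - 1 := by
      intro z hz
      have hadj : G.Adj x z := by simpa [hA] using hz
      have h1 : B ∩ G.neighborFinset z = G.neighborFinset z \ insert x A := by
        rw [hB]
        ext u
        simp only [Finset.mem_inter, Finset.mem_sdiff, Finset.mem_univ, true_and]
        tauto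
      have hxNz : x ∈ G.neighborFinset z := by simp [hadj.symm]
      have h2 : G.neighborFinset z ∩ insert x A = insert x (G.neighborFinset z ∩ A) := by
        ext u
        simp only [Finset.mem_inter, Finset.mem_insert]
        constructor
        · rintro ⟨hu, rfl | hu'⟩
          · exact Or.inl rfl
          · exact Or.inr ⟨hu, hu'⟩
        · rintro (rfl | ⟨hu, hu'⟩)
          · exact ⟨hxNz, Or.inl rfl⟩
          · exact ⟨hu, Or.inr hu'⟩
      have h3 : (G.neighborFinset z ∩ A).card = l := by
        have := hl x z hadj
        rw [hC x z] at this
        rw [Finset.inter_comm]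
        exact this
      have h4 : (G.neighborFinset z ∩ insert x A).card = l + 1 := by
        rw [h2, Finset.card_insert_of_notMem (by simp [hA]), h3]
      have h5 : (G.neighborFinset z \ insert x A).card + (G.neighborFinset z ∩ insert x A).card
          = (G.neighborFinset z).card := Finset.card_sdiff_add_card_inter _ _
      rw [h1]
      have := h5
      rw [h4, hN z] at this
      omega
    have hS : ∑ w ∈ B, ((A ∩ G.neighborFinset w).card : ℤ) = k * (k - l - 1) := by
      rw [hsum, Finset.sum_congr rfl hz, Finset.sum_const, nsmul_eq_mul, hN x]
    -- lower bound per term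
    have hlb : ∀ w ∈ B, (2 * (k : ℤ) + 2 - v) ≤ ((A ∩ G.neighborFinset w).card : ℤ) := by
      intro w hw
      rw [hmemB] at hw
      obtain ⟨hwx, hwn⟩ := hw
      have hsub : A ∪ G.neighborFinset w ⊆ Finset.univ \ {x, w} := by
        intro u hu
        simp only [Finset.mem_sdiff, Finset.mem_univ, true_and, Finset.mem_insert,
          Finset.mem_singleton]
        rcases Finset.mem_union.1 hu with hu | hu
        · simp only [hA, SimpleGraph.mem_neighborFinset] at hu
          push_neg
          exact ⟨fun h' => by exact G.irrefl (h' ▸ hu), fun h' => hwn (h' ▸ hu)⟩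
        · simp only [SimpleGraph.mem_neighborFinset] at hu
          push_neg
          refine ⟨fun h' => hwn ?_, fun h' => G.irrefl (h' ▸ hu)⟩
          exact (h' ▸ hu).symm
      have hcard2 : ((Finset.univ \ ({x, w} : Finset V)).card : ℤ) = v - 2 := by
        have hxw : ({x, w} : Finset V).card = 2 := by
          rw [Finset.card_pair (by exact fun h' => hwx h'.symm)]
        have h2le : ({x, w} : Finset V).card ≤ Fintype.card V := by
          rw [← Finset.card_univ]; exact Finset.card_le_card (Finset.subset_univ _)
        rw [Finset.card_sdiff_of_subset (Finset.subset_univ _), Finset.card_univ, hxw, hcard]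
        rw [hxw, hcard] at h2le
        omega
      have hun : ((A ∪ G.neighborFinset w).card : ℤ) ≤ v - 2 := by
        rw [← hcard2]
        exact_mod_cast Finset.card_le_card hsub
      have heq : ((A ∪ G.neighborFinset w).card : ℤ) + ((A ∩ G.neighborFinset w).card : ℤ)
          = 2 * k := by
        have := Finset.card_union_add_card_inter A (G.neighborFinset w)
        have h' : (A ∪ G.neighborFinset w).card + (A ∩ G.neighborFinset w).card = k + k := by
          rw [this, hA, hN x, hN w]
        omega
      linarith
    -- total is exactly the bound times count
    have htotal : ∑ w ∈ B, (((A ∩ G.neighborFinset w).card : ℤ) - (2 * k + 2 - v)) = 0 := by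
      rw [Finset.sum_sub_distrib, hS, Finset.sum_const, nsmul_eq_mul]
      rw [show ((B.card : ℕ) : ℤ) = (v : ℤ) - k - 1 from hBcard]
      linear_combination h0
    have hyB : y ∈ B := (hmemB y).2 ⟨fun h' => hxy h'.symm, hxyn⟩
    have := (Finset.sum_eq_zero_iff_of_nonneg (fun w hw => by
      have := hlb w hw; linarith)).1 htotal y hyB
    linarith
  have hvle : v ≤ 2 * k + 2 := by
    have h1 := key p q hpq hnadj
    have h2 : (0 : ℤ) ≤ ((G.neighborFinset p ∩ G.neighborFinset q).card : ℤ) := by positivity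
    omega
  refine ⟨2 * k + 2 - v, hv, hk, hnc, ?_⟩
  intro x y hxy hxyn
  rw [hC x y]
  have h1 := key x y hxy hxyn
  omega
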